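/- In [0,∞] define z ⊖ y = sup{v ∈ [0,∞] | v + y ≤ z} (truncated difference, with ∞ ⊖ y = ∞ for all y). Then for every nonempty subset S ⊆ [0,∞] and every x ∈ [0,∞]: the infimum, over all ultrafilters 𝔵 on [0,∞] with S ∈ 𝔵, of x ⊖ (inf_{R ∈ 𝔵} sup R), equals x ⊖ sup S. (This identifies the ultrafilter convergence ν_sup(𝔵,x) = x ⊖ inf_{R ∈ 𝔵} sup R on the Lawvere quantale [0,∞] with the point-set distance δ_sup(S,x) = x ⊖ sup S on nonempty sets.) -/

import Mathlib

open scoped ENNReal Topology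

/-- Truncated difference on `[0,∞]` as defined in the paper:
`z ⊖ y = sup {v | v + y ≤ z}` (so that `∞ ⊖ y = ∞` for all `y`). -/
noncomputable def tdiff (z y : ℝ≥0∞) : ℝ≥0∞ :=
  sSup {v : ℝ≥0∞ | v + y ≤ z}

lemma tdiff_anti (x : ℝ≥0∞) {y y' : ℝ≥0∞} (h : y ≤ y') : tdiff x y' ≤ tdiff x y := by
  apply sSup_le_sSup
  intro v hv
  exact le_trans (add_le_add (le_refl v) h) hv

/-- **Example 5.8** of the paper: the ultrafilter convergence
`ν_sup(𝔵,x) = x ⊖ inf_{R ∈ 𝔵} sup R` on the Lawvere quantale `[0,∞]`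
corresponds to the point-set distance `δ_sup(S,x) = x ⊖ sup S` on nonempty
sets: for every nonempty `S ⊆ [0,∞]` and `x ∈ [0,∞]`,
`inf { x ⊖ (inf_{R ∈ 𝔵} sup R) | 𝔵 an ultrafilter with S ∈ 𝔵 } = x ⊖ sup S`. -/
theorem nu_sup_corresponds_delta_sup (S : Set ℝ≥0∞) (hS : S.Nonempty) (x : ℝ≥0∞) :
    (⨅ 𝔵 : Ultrafilter ℝ≥0∞, ⨅ _ : S ∈ 𝔵,
        tdiff x (⨅ R : Set ℝ≥0∞, ⨅ _ : R ∈ 𝔵, sSup R)) = tdiff x (sSup S) := by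
  set s := sSup S with hs
  apply le_antisymm
  · -- find an ultrafilter 𝔵 ≤ 𝓝 s ⊓ 𝓟 S
    have hcl : s ∈ closure S := sSup_mem_closure hS
    have hne : (𝓝 s ⊓ Filter.principal S).NeBot :=
      mem_closure_iff_clusterPt.mp hcl
    obtain ⟨𝔵, h𝔵⟩ := Filter.exists_ultrafilter_le (𝓝 s ⊓ Filter.principal S)
    have hS𝔵 : S ∈ 𝔵 := Filter.le_principal_iff.mp (h𝔵.trans inf_le_right)
    have hinf : (⨅ R : Set ℝ≥0∞, ⨅ _ : R ∈ 𝔵, sSup R) = s := by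
      apply le_antisymm
      · exact iInf₂_le S hS𝔵
      · refine le_iInf₂ fun R hR => ?_
        have hRne : (𝓝 s ⊓ Filter.principal R).NeBot := by
          refine Filter.neBot_of_le (f := 𝔵.toFilter) ?_
          exact le_inf (h𝔵.trans inf_le_left) (Filter.le_principal_iff.mpr hR)
        have : s ∈ closure R := mem_closure_iff_clusterPt.mpr hRne
        have hsub : closure R ⊆ Set.Iic (sSup R) :=
          closure_minimal (fun a ha => le_sSup ha) isClosed_Iic
        exact hsub this
    calc (⨅ 𝔶 : Ultrafilter ℝ≥0∞, ⨅ _ : S ∈ 𝔶,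
        tdiff x (⨅ R : Set ℝ≥0∞, ⨅ _ : R ∈ 𝔶, sSup R))
        ≤ tdiff x (⨅ R : Set ℝ≥0∞, ⨅ _ : R ∈ 𝔵, sSup R) := iInf₂_le 𝔵 hS𝔵
      _ = tdiff x s := by rw [hinf]
  · refine le_iInf₂ fun 𝔵 hS𝔵 => ?_
    exact tdiff_anti x (iInf₂_le S hS𝔵)
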